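/- For the Ising mean-field theory: for J > 2, the maximal positive solution ρ of ρ = tanh(Jρ/2) satisfies J(1 − ρ²) < 2. -/
import Mathlib

/-- For the Ising mean-field theory with `J > 2`, the maximal
positive solution `ρ` of `ρ = tanh(Jρ/2)` satisfies `J(1 − ρ²) < 2`. -/
theorem stmt_10
    (J ρ : ℝ) (hJ : 2 < J)
    (hρ_pos : 0 < ρ)
    (hρ_sol : ρ = Real.tanh (J * ρ / 2))
    (hρ_max : ∀ ρ' : ℝ, 0 < ρ' → ρ' = Real.tanh (J * ρ' / 2) → ρ' ≤ ρ) :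
    J * (1 - ρ ^ 2) < 2 := by
  set x := J * ρ / 2 with hx
  have hx0 : 0 < x := by
    have : 0 < J := by linarith
    positivity
  have hs : 0 < Real.sinh x := Real.sinh_pos_iff.mpr hx0
  have hc : 0 < Real.cosh x := Real.cosh_pos x
  have hρc : ρ * Real.cosh x = Real.sinh x := by
    rw [hρ_sol, Real.tanh_eq_sinh_div_cosh]
    field_simp
  have hcs : Real.cosh x ^ 2 - Real.sinh x ^ 2 = 1 := Real.cosh_sq_sub_sinh_sq x
  have h1ρ : (1 - ρ ^ 2) * Real.cosh x ^ 2 = 1 := by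
    linear_combination hcs - (ρ * Real.cosh x + Real.sinh x) * hρc
  have hJρ : J * ρ = 2 * x := by rw [hx]; ring
  have hgoal : J * (1 - ρ ^ 2) * (Real.sinh x * Real.cosh x) = 2 * x := by
    linear_combination (-(J * (1 - ρ ^ 2) * Real.cosh x)) * hρc + (J * ρ) * h1ρ + hJρ
  have key : 2 * x < 2 * (Real.sinh x * Real.cosh x) := by
    have h := Real.self_lt_sinh_iff.mpr (by linarith : 0 < 2 * x)
    rw [Real.sinh_two_mul] at h
    linarith
  have hsc : 0 < Real.sinh x * Real.cosh x := mul_pos hs hc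
  nlinarith [hgoal, key, hsc]
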